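/- Let p ≥ 2 and let μ ∈ S^{p-1}. Let f(x) = F(μᵀx) and g(x) = G(μᵀx) be integrable rotationally symmetric functions about μ on S^{p-1}. Then the spherical convolution is commutative: (f ⋆_μ g)(x) = (g ⋆_μ f)(x) for all x ∈ S^{p-1}, where (f ⋆_μ g)(x) = ∫_{S^{p-1}} F(xᵀy) G(yᵀμ) dy. -/

import Mathlib

open MeasureTheory Set
open scoped RealInnerProductSpace
open scoped Pointwise

noncomputable section

/-- The unit sphere `S^{p-1} = {x ∈ ℝ^p : ‖x‖ = 1}` in `ℝ^p`. -/
abbrev Sph (p : ℕ) : Type := Metric.sphere (0 : EuclideanSpace ℝ (Fin p)) 1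

/-- The `(p-1)`-dimensional surface measure on the unit sphere `S^{p-1}`. -/
def sphMeasure (p : ℕ) : Measure (Sph p) :=
  (volume : Measure (EuclideanSpace ℝ (Fin p))).toSphere

/-- The cosine `xᵀy` of the angle between two points of the sphere. -/
def cosAngle {p : ℕ} (x y : Sph p) : ℝ :=
  ⟪(x : EuclideanSpace ℝ (Fin p)), (y : EuclideanSpace ℝ (Fin p))⟫

/-- The spherical convolution `(f ⋆_μ g)(x) = ∫_{S^{p-1}} F(xᵀy) G(yᵀμ) dy` of two
rotationally symmetric functions `f(x) = F(μᵀx)`, `g(x) = G(μᵀx)` about the axis `μ`. -/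
def sphConv {p : ℕ} (F G : ℝ → ℝ) (μ : Sph p) (x : Sph p) : ℝ :=
  ∫ y : Sph p, F (cosAngle x y) * G (cosAngle y μ) ∂(sphMeasure p)

/-- The map on the unit sphere induced by a linear isometry equivalence of the ambient space. -/
def sphMap {p : ℕ} (e : EuclideanSpace ℝ (Fin p) ≃ₗᵢ[ℝ] EuclideanSpace ℝ (Fin p)) :
    Sph p ≃ᵐ Sph p where
  toEquiv := e.toEquiv.subtypeEquiv (fun v => by
    simp [Metric.mem_sphere, dist_eq_norm, e.norm_map])
  measurable_toFun := ((e.continuous.comp continuous_subtype_val).subtype_mk _).measurable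
  measurable_invFun := ((e.symm.continuous.comp continuous_subtype_val).subtype_mk _).measurable

lemma sphMap_coe {p : ℕ} (e : EuclideanSpace ℝ (Fin p) ≃ₗᵢ[ℝ] EuclideanSpace ℝ (Fin p))
    (y : Sph p) : ((sphMap e y : Sph p) : EuclideanSpace ℝ (Fin p)) = e y := rfl

lemma sphMap_symm_coe {p : ℕ} (e : EuclideanSpace ℝ (Fin p) ≃ₗᵢ[ℝ] EuclideanSpace ℝ (Fin p))
    (y : Sph p) : (((sphMap e).symm y : Sph p) : EuclideanSpace ℝ (Fin p)) = e.symm y := rfl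

/-- The surface measure of the sphere is invariant under (the restriction of) any linear
isometry of the ambient space. -/
lemma sphMap_measurePreserving {p : ℕ}
    (e : EuclideanSpace ℝ (Fin p) ≃ₗᵢ[ℝ] EuclideanSpace ℝ (Fin p)) :
    MeasurePreserving (sphMap e)
      (volume : Measure (EuclideanSpace ℝ (Fin p))).toSphere
      (volume : Measure (EuclideanSpace ℝ (Fin p))).toSphere := by
  refine ⟨(sphMap e).measurable, ?_⟩
  ext s hs
  rw [MeasurableEquiv.map_apply, Measure.toSphere_apply' _ (hs.preimage (sphMap e).measurable),
    Measure.toSphere_apply' _ hs]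
  congr 1
  have h1 : (Subtype.val '' ((sphMap e) ⁻¹' s) : Set (EuclideanSpace ℝ (Fin p)))
      = e.symm '' (Subtype.val '' s) := by
    ext v
    constructor
    · rintro ⟨a, ha, rfl⟩
      exact ⟨↑(sphMap e a), ⟨sphMap e a, ha, rfl⟩, by simp [sphMap_coe]⟩
    · rintro ⟨b, ⟨c, hc, rfl⟩, rfl⟩
      exact ⟨(sphMap e).symm c,
        by simpa using (show sphMap e ((sphMap e).symm c) ∈ s by
          rw [MeasurableEquiv.apply_symm_apply]; exact hc), rfl⟩
  rw [h1]
  have h2 : Set.Ioo (0:ℝ) 1 • (e.symm '' (Subtype.val '' s))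
      = e.symm '' (Set.Ioo (0:ℝ) 1 • (Subtype.val '' s)) := by
    rw [← Set.iUnion_smul_set, ← Set.iUnion_smul_set, Set.image_iUnion₂]
    refine Set.iUnion₂_congr fun r _ => ?_
    rw [← Set.image_smul, ← Set.image_smul]
    simp only [Set.image_image]
    refine Set.image_congr fun x _ => ?_
    simp [_root_.map_smul]
  rw [h2]
  have h4 : ⇑e.symm '' (Set.Ioo (0:ℝ) 1 • (Subtype.val '' s))
      = ⇑e ⁻¹' (Set.Ioo (0:ℝ) 1 • (Subtype.val '' s)) := by
    ext v
    constructor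
    · rintro ⟨w, hw, rfl⟩
      simpa using hw
    · intro hv
      exact ⟨e v, hv, by simp⟩
  rw [h4]
  exact (e.toMeasurableEquiv.measurableEmbedding.map_apply volume _).symm.trans
    (by rw [show ⇑e.toMeasurableEquiv = ⇑e from rfl, e.measurePreserving.map_eq])

/-- commutativity of the spherical convolution of two integrable rotationally
symmetric (about the same axis `μ`) functions on `S^{p-1}`:
`(f ⋆_μ g)(x) = (g ⋆_μ f)(x)` for all `x ∈ S^{p-1}`. -/
theorem stmt_1 {p : ℕ} (hp : 2 ≤ p) (μ : Sph p) (F G : ℝ → ℝ)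
    (hF : Integrable (fun x : Sph p => F (cosAngle μ x)) (sphMeasure p))
    (hG : Integrable (fun x : Sph p => G (cosAngle μ x)) (sphMeasure p)) :
    ∀ x : Sph p, sphConv F G μ x = sphConv G F μ x := by
  intro x
  set e : EuclideanSpace ℝ (Fin p) ≃ₗᵢ[ℝ] EuclideanSpace ℝ (Fin p) :=
    Submodule.reflection (ℝ ∙ ((x : EuclideanSpace ℝ (Fin p)) - (μ : EuclideanSpace ℝ (Fin p))))ᗮ with he
  have hnx : ‖(x : EuclideanSpace ℝ (Fin p))‖ = 1 := mem_sphere_zero_iff_norm.mp x.2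
  have hnμ : ‖(μ : EuclideanSpace ℝ (Fin p))‖ = 1 := mem_sphere_zero_iff_norm.mp μ.2
  have hx : e (x : EuclideanSpace ℝ (Fin p)) = (μ : EuclideanSpace ℝ (Fin p)) :=
    Submodule.reflection_sub (by rw [hnx, hnμ])
  have hμ : e (μ : EuclideanSpace ℝ (Fin p)) = (x : EuclideanSpace ℝ (Fin p)) := by
    rw [← hx, he, Submodule.reflection_reflection]
  have hadj : ∀ u v : EuclideanSpace ℝ (Fin p), ⟪u, e v⟫ = ⟪e u, v⟫ := fun u v => by
    conv_lhs => rw [← show e (e u) = u by rw [he, Submodule.reflection_reflection]]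
    rw [e.inner_map_map]
  have key := (sphMap_measurePreserving e).integral_comp
    (sphMap e).measurableEmbedding (fun y : Sph p => F (cosAngle x y) * G (cosAngle y μ))
  rw [sphConv, sphConv, sphMeasure, ← key]
  refine integral_congr_ae (Filter.Eventually.of_forall fun y => ?_)
  show F (cosAngle x (sphMap e y)) * G (cosAngle (sphMap e y) μ)
      = G (cosAngle x y) * F (cosAngle y μ)
  unfold cosAngle
  rw [sphMap_coe, hadj, hx, ← hadj, hμ, real_inner_comm (μ : EuclideanSpace ℝ (Fin p)),
    real_inner_comm (y : EuclideanSpace ℝ (Fin p)) (x : EuclideanSpace ℝ (Fin p)), mul_comm]
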